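/- Let R be a commutative ring and I ⊆ R a nilpotent ideal. Let A be a commutative R-algebra and a₁, …, a_d ∈ A elements such that the induced (R/I)-algebra homomorphism (R/I)[x₁, …, x_d] → A/IA sending xᵢ to the image of aᵢ is an isomorphism. Let J be the kernel of the surjective R-algebra homomorphism R[x₁, …, x_d] → A sending xᵢ to aᵢ. Then J ⊆ I·R[x₁, …, x_d]. -/
import Mathlib


/-- Let `R` be a commutative ring and `I ⊆ R` a nilpotent ideal.  Let `A` be a
commutative `R`-algebra and `a₁, …, a_d ∈ A` elements such that the induced
`(R/I)`-algebra homomorphism `(R/I)[x₁, …, x_d] → A/IA`, `xᵢ ↦ aᵢ mod IA`, is an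
isomorphism (it is the ring homomorphism determined by the quotient map
`R/I → A/IA` of `algebraMap R A` on coefficients, sending each variable `xᵢ` to
the class of `aᵢ`).  Let `J` be the kernel of the `R`-algebra homomorphism
`R[x₁, …, x_d] → A`, `xᵢ ↦ aᵢ`.  Then `J ⊆ I·R[x₁, …, x_d]`, the ideal of
polynomials all of whose coefficients lie in `I` (i.e. the ideal generated by the
constants `C r`, `r ∈ I`). -/
theorem ker_le_nilpotent_coeff_ideal_of_mod_iso
    (R : Type*) [CommRing R] (I : Ideal R) (hInil : ∃ n : ℕ, 1 ≤ n ∧ I ^ n = ⊥)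
    (A : Type*) [CommRing A] [Algebra R A] (d : ℕ) (a : Fin d → A)
    (hiso : Function.Bijective
      (MvPolynomial.eval₂Hom
        (Ideal.quotientMap (I.map (algebraMap R A)) (algebraMap R A) Ideal.le_comap_map)
        (fun i => Ideal.Quotient.mk (I.map (algebraMap R A)) (a i)) :
        MvPolynomial (Fin d) (R ⧸ I) →+* A ⧸ I.map (algebraMap R A))) :
    RingHom.ker (MvPolynomial.aeval (R := R) a)
      ≤ Ideal.map (MvPolynomial.C : R →+* MvPolynomial (Fin d) R) I := by
  intro f hf
  rw [RingHom.mem_ker] at hf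
  rw [MvPolynomial.mem_map_C_iff]
  have h0 : MvPolynomial.map (Ideal.Quotient.mk I) f = 0 := by
    apply hiso.injective
    rw [map_zero]
    rw [MvPolynomial.eval₂Hom_map_hom]
    have : (Ideal.quotientMap (I.map (algebraMap R A)) (algebraMap R A)
        Ideal.le_comap_map).comp (Ideal.Quotient.mk I)
        = (Ideal.Quotient.mk (I.map (algebraMap R A))).comp (algebraMap R A) :=
      Ideal.quotientMap_comp_mk _
    rw [this]
    rw [show (MvPolynomial.eval₂Hom ((Ideal.Quotient.mk (I.map (algebraMap R A))).comp
        (algebraMap R A)) fun i => Ideal.Quotient.mk (I.map (algebraMap R A)) (a i)) f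
      = Ideal.Quotient.mk (I.map (algebraMap R A)) (MvPolynomial.aeval (R := R) a f) by
        simp [MvPolynomial.aeval_def, MvPolynomial.eval₂_comp_left, MvPolynomial.eval₂Hom]; rfl]
    rw [hf, map_zero]
  intro m
  have := congrArg (fun g => MvPolynomial.coeff m g) h0
  simpa [MvPolynomial.coeff_map, Ideal.Quotient.eq_zero_iff_mem] using this
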